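/- arXiv:1609.08995 — 2 statements merged into one kernel-verified Lean document; each statement's English description precedes it below -/
import Mathlib

section
/- Let $(X,d,\mu)$ be a metric measure space with a dominating function $\lambda: X \times (0,\infty) \to (0,\infty)$ such that each $r \mapsto \lambda(x,r)$ is non-decreasing, $\mu(B(x,r)) \le \lambda(x,r)$, and $\lambda(x,r) \le C_\lambda \lambda(x,r/2)$ for all $x,r$. Then there exists a dominating function $\tilde\lambda$ with the same three properties (possibly with a larger constant) which additionally satisfies $\tilde\lambda(x,r) \le C \tilde\lambda(y,r)$ whenever $d(x,y) \le r$. (One may take $\tilde\lambda(x,r) = \inf_{z \in X} \lambda(z, r + d(x,z))$ or $\tilde\lambda(x,r)=\sup_{d(x,y)\le r}\lambda(y,r)$, suitably adjusted.) -/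
open MeasureTheory Metric ENNReal

/-- If `(X,d,μ)` is upper doubling with dominating function `lam` (non-decreasing in `r`,
dominating `μ` on balls, and satisfying the halving condition with constant `Cl`), then there
exists a dominating function `lam'` with the same three properties (possibly with a larger
constant `C`) which in addition is quasi-invariant: `lam' x r ≤ C * lam' y r` whenever
`dist x y ≤ r`. -/
theorem stmt0 {X : Type*} [MetricSpace X] [MeasurableSpace X] (μ : Measure X)
    (lam : X → ℝ → ℝ≥0∞) (Cl : ℝ≥0∞) (hCl : 1 ≤ Cl) (hClfin : Cl < ⊤)
    (hpos : ∀ x r, 0 < r → 0 < lam x r ∧ lam x r < ⊤)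
    (hmono : ∀ x r s, 0 < r → r ≤ s → lam x r ≤ lam x s)
    (hdom : ∀ x r, 0 < r → μ (ball x r) ≤ lam x r)
    (hhalf : ∀ x r, 0 < r → lam x r ≤ Cl * lam x (r / 2)) :
    ∃ (lam' : X → ℝ → ℝ≥0∞) (C : ℝ≥0∞), 1 ≤ C ∧ C < ⊤ ∧
      (∀ x r, 0 < r → 0 < lam' x r ∧ lam' x r < ⊤) ∧
      (∀ x r s, 0 < r → r ≤ s → lam' x r ≤ lam' x s) ∧
      (∀ x r, 0 < r → μ (ball x r) ≤ lam' x r) ∧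
      (∀ x r, 0 < r → lam' x r ≤ C * lam' x (r / 2)) ∧
      (∀ x y r, 0 < r → dist x y ≤ r → lam' x r ≤ C * lam' y r) := by
  classical
  have hCl0 : Cl ≠ 0 := fun h => by simp [h] at hCl
  have hClt : Cl ≠ ⊤ := hClfin.ne
  -- f : infimum construction, g : small positive perturbation
  set f : X → ℝ → ℝ≥0∞ := fun x r => ⨅ z, lam z (r + dist x z) with hf
  set g : ℝ → ℝ≥0∞ := fun r => ENNReal.ofReal (min r 1) with hg
  -- doubling for `lam` at any scale: lam z (2 t) ≤ Cl * lam z t for t > 0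
  have hdouble : ∀ z t, 0 < t → lam z (2 * t) ≤ Cl * lam z t := by
    intro z t ht
    have := hhalf z (2 * t) (by linarith)
    simpa [mul_div_assoc] using this
  -- comparison lemma for f
  have hf_le : ∀ (x y : X) (r s : ℝ), 0 < r →
      (∀ z, lam z (r + dist x z) ≤ Cl * lam z (s + dist y z)) → f x r ≤ Cl * f y s := by
    intro x y r s hr h
    rw [hf, ENNReal.mul_iInf_of_ne hCl0 hClt]
    exact le_iInf fun z => (iInf_le _ z).trans (h z)
  have htwoCl : (2 : ℝ≥0∞) ≤ 2 * Cl := by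
    calc (2 : ℝ≥0∞) = 2 * 1 := (mul_one _).symm
      _ ≤ 2 * Cl := _root_.mul_le_mul_right hCl 2
  refine ⟨fun x r => f x r + g r, 2 * Cl, ?_, ?_, ?_, ?_, ?_, ?_, ?_⟩
  · calc (1 : ℝ≥0∞) ≤ Cl := hCl
      _ ≤ 2 * Cl := le_mul_of_one_le_left zero_le (by norm_num)
  · exact ENNReal.mul_lt_top (by norm_num) hClfin
  · intro x r hr
    constructor
    · have : (0 : ℝ≥0∞) < g r := by
        rw [hg]
        simp only [ENNReal.ofReal_pos]
        exact lt_min hr one_pos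
      exact this.trans_le le_add_self
    · have hfx : f x r ≤ lam x r := by
        have := iInf_le (fun z => lam z (r + dist x z)) x
        simpa using this
      have : f x r < ⊤ := hfx.trans_lt (hpos x r hr).2
      exact ENNReal.add_lt_top.2 ⟨this, ENNReal.ofReal_lt_top⟩
  · intro x r s hr hrs
    refine add_le_add ?_ ?_
    · exact iInf_mono fun z => hmono z _ _ (by positivity) (by linarith)
    · exact ENNReal.ofReal_le_ofReal (by simp [min_le_min_right, hrs])
  · intro x r hr
    have : μ (ball x r) ≤ f x r := by
      refine le_iInf fun z => ?_
      have hsub : ball x r ⊆ ball z (r + dist x z) := by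
        intro w hw
        have := dist_triangle w x z
        simp only [mem_ball] at hw ⊢
        linarith
      exact (measure_mono hsub).trans (hdom z _ (by positivity))
    exact this.trans le_self_add
  · intro x r hr
    have h1 : f x r ≤ Cl * f x (r / 2) := by
      refine hf_le x x r (r / 2) hr fun z => ?_
      have h2 : r + dist x z ≤ 2 * (r / 2 + dist x z) := by
        have := dist_nonneg (x := x) (y := z); linarith
      calc lam z (r + dist x z) ≤ lam z (2 * (r / 2 + dist x z)) :=
            hmono z _ _ (by positivity) h2
        _ ≤ Cl * lam z (r / 2 + dist x z) := hdouble z _ (by positivity)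
    have h2 : g r ≤ 2 * g (r / 2) := by
      have hreal : min r 1 ≤ 2 * min (r / 2) 1 := by
        rcases le_total r 1 with h | h
        · rw [min_eq_left h, min_eq_left (by linarith : r / 2 ≤ 1)]; linarith
        · rw [min_eq_right h]
          rcases le_total (r / 2) 1 with h' | h'
          · rw [min_eq_left h']; linarith
          · rw [min_eq_right h']; linarith
      calc g r ≤ ENNReal.ofReal (2 * min (r / 2) 1) := ENNReal.ofReal_le_ofReal hreal
        _ = 2 * g (r / 2) := by
            rw [hg]
            rw [ENNReal.ofReal_mul (by norm_num)]
            norm_num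
    calc f x r + g r ≤ Cl * f x (r / 2) + 2 * g (r / 2) := add_le_add h1 h2
      _ ≤ 2 * Cl * f x (r / 2) + 2 * Cl * g (r / 2) := by
          refine add_le_add ?_ ?_
          · exact _root_.mul_le_mul_left (le_mul_of_one_le_left zero_le (by norm_num)) _
          · exact _root_.mul_le_mul_left htwoCl _
      _ = 2 * Cl * (f x (r / 2) + g (r / 2)) := by ring
  · intro x y r hr hxy
    have h1 : f x r ≤ Cl * f y r := by
      refine hf_le x y r r hr fun z => ?_
      have h2 : r + dist x z ≤ 2 * (r + dist y z) := by
        have h3 := dist_triangle x y z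
        have := dist_nonneg (x := y) (y := z)
        linarith
      calc lam z (r + dist x z) ≤ lam z (2 * (r + dist y z)) :=
            hmono z _ _ (by positivity) h2
        _ ≤ Cl * lam z (r + dist y z) := hdouble z _ (by positivity)
    calc f x r + g r ≤ Cl * f y r + g r := add_le_add h1 le_rfl
      _ ≤ 2 * Cl * f y r + 2 * Cl * g r := by
          refine add_le_add ?_ ?_
          · exact _root_.mul_le_mul_left (le_mul_of_one_le_left zero_le (by norm_num)) _
          · exact le_mul_of_one_le_left zero_le
              ((by norm_num : (1 : ℝ≥0∞) ≤ 2).trans htwoCl)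
      _ = 2 * Cl * (f y r + g r) := by ring
end

section
/- Let $(X,d,\mu)$ be upper doubling with dominating function $\lambda$. Define the bilinear maximal operator $\mathcal{M}_\lambda(f_1,f_2)(x) = \sup_{r>0} \lambda(x,r)^{-2} \left(\int_{B(x,r)} |f_1| \,d\mu\right)\left(\int_{B(x,r)} |f_2| \,d\mu\right)$. Then $\mathcal{M}_\lambda$ is bounded from $L^1(\mu) \times L^1(\mu)$ to $L^{1/2,\infty}(\mu)$: there is a constant $C$ such that for all $f_1,f_2 \in L^1(\mu)$ and all $t>0$, $\mu\{x : \mathcal{M}_\lambda(f_1,f_2)(x) > t\} \le C \left(t^{-1}\|f_1\|_{L^1(\mu)}\|f_2\|_{L^1(\mu)}\right)^{1/2}$. -/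
open MeasureTheory Metric ENNReal

lemma weak11 {X : Type*} [MetricSpace X] [MeasurableSpace X] [BorelSpace X]
    (μ : Measure X) (lam : X → ℝ → ℝ≥0∞) (Cl : ℝ≥0∞)
    (hpos : ∀ x r, 0 < r → 0 < lam x r ∧ lam x r < ⊤)
    (hmono : ∀ x r s, 0 < r → r ≤ s → lam x r ≤ lam x s)
    (hdom : ∀ x r, 0 < r → μ (ball x r) ≤ lam x r)
    (hhalf : ∀ x r, 0 < r → lam x r ≤ Cl * lam x (r / 2))
    (f : X → ℝ) (hf : Integrable f μ) (s : ℝ≥0∞) (hs : 0 < s) (hs' : s ≠ ⊤) :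
    μ {x | s < ⨆ (r : ℝ) (_ : 0 < r), (lam x r)⁻¹ * ∫⁻ y in ball x r, ‖f y‖₊ ∂μ}
      ≤ Cl ^ 3 * (s⁻¹ * ∫⁻ y, ‖f y‖₊ ∂μ) := by
  classical
  set ν : Measure X := μ.withDensity (fun y => (‖f y‖₊ : ℝ≥0∞)) with hν
  have hνball : ∀ (x : X) (r : ℝ), ν (ball x r) = ∫⁻ y in ball x r, ‖f y‖₊ ∂μ := by
    intro x r
    rw [hν, withDensity_apply _ measurableSet_ball]
  have hνuniv : ν Set.univ = ∫⁻ y, ‖f y‖₊ ∂μ := by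
    rw [hν, withDensity_apply _ MeasurableSet.univ, Measure.restrict_univ]
  have hνtop : ν Set.univ ≠ ⊤ := by
    rw [hνuniv]; exact hf.2.ne
  -- truncated level sets
  set E : ℕ → Set X := fun n =>
    {x | ∃ r : ℝ, 0 < r ∧ r ≤ n ∧ s * lam x r < ν (ball x r)} with hE
  have key : ∀ n : ℕ, μ (E n) ≤ Cl ^ 3 * (s⁻¹ * ν Set.univ) := by
    intro n
    choose! rad hrad0 hradn hradlt using fun x (hx : x ∈ E n) => hx
    obtain ⟨u, hu_sub, hu_disj, hu_cov⟩ :=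
      Vitali.exists_disjoint_subfamily_covering_enlargement_closedBall (E n) id rad n
        (fun a ha => hradn a ha) 4 (by norm_num)
    have hEsub : E n ⊆ ⋃ b ∈ u, closedBall b (4 * rad b) := by
      intro a ha
      obtain ⟨b, hb, hsub⟩ := hu_cov a ha
      exact Set.mem_biUnion hb (hsub (mem_closedBall_self (hrad0 a ha).le))
    -- countability of u
    have hballs_disj : Pairwise (Function.onFun Disjoint fun b : u => ball (b : X) (rad b)) := by
      intro b c hbc
      exact Disjoint.mono ball_subset_closedBall ball_subset_closedBall
        (hu_disj b.2 c.2 (fun h => hbc (Subtype.ext h)))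
    have hu_cnt : u.Countable := by
      have hcnt := MeasureTheory.Measure.countable_meas_pos_of_disjoint_of_meas_iUnion_ne_top
        (ι := u) ν (As := fun b => ball (b : X) (rad b)) (fun b => measurableSet_ball)
        hballs_disj (by
          refine ne_top_of_le_ne_top hνtop (measure_mono (Set.subset_univ _)))
      have huniv : {i : u | 0 < ν (ball (i : X) (rad i))} = Set.univ := by
        ext b
        simp only [Set.mem_setOf_eq, Set.mem_univ, iff_true]
        have hb := hradlt b (hu_sub b.2)
        exact lt_of_le_of_lt zero_le hb
      rw [huniv] at hcnt
      have : Countable u := Set.countable_univ_iff.mp hcnt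
      exact Set.countable_coe_iff.mp this
    -- per-ball estimate
    have hper : ∀ b ∈ u, μ (closedBall b (4 * rad b))
        ≤ Cl ^ 3 * (s⁻¹ * ν (ball b (rad b))) := by
      intro b hb
      have hbE := hu_sub hb
      have hr0 : 0 < rad b := hrad0 b hbE
      have h1 : μ (closedBall b (4 * rad b)) ≤ lam b (8 * rad b) := by
        refine le_trans (measure_mono ?_) (hdom b (8 * rad b) (by linarith))
        intro y hy
        simp only [mem_closedBall] at hy
        simp only [mem_ball]
        linarith
      have h2 : lam b (8 * rad b) ≤ Cl ^ 3 * lam b (rad b) := by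
        have e1 : lam b (8 * rad b) ≤ Cl * lam b (4 * rad b) := by
          have := hhalf b (8 * rad b) (by linarith)
          rwa [show (8 : ℝ) * rad b / 2 = 4 * rad b by ring] at this
        have e2 : lam b (4 * rad b) ≤ Cl * lam b (2 * rad b) := by
          have := hhalf b (4 * rad b) (by linarith)
          rwa [show (4 : ℝ) * rad b / 2 = 2 * rad b by ring] at this
        have e3 : lam b (2 * rad b) ≤ Cl * lam b (rad b) := by
          have := hhalf b (2 * rad b) (by linarith)
          rwa [show (2 : ℝ) * rad b / 2 = rad b by ring] at this
        calc lam b (8 * rad b) ≤ Cl * lam b (4 * rad b) := e1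
          _ ≤ Cl * (Cl * lam b (2 * rad b)) := by exact mul_le_mul_right e2 _
          _ ≤ Cl * (Cl * (Cl * lam b (rad b))) := by
              exact mul_le_mul_right (mul_le_mul_right e3 _) _
          _ = Cl ^ 3 * lam b (rad b) := by ring
      have h3 : lam b (rad b) ≤ s⁻¹ * ν (ball b (rad b)) := by
        have hlt := (hradlt b hbE).le
        calc lam b (rad b) = s⁻¹ * (s * lam b (rad b)) := by
              rw [← mul_assoc, ENNReal.inv_mul_cancel hs.ne' hs', one_mul]
          _ ≤ s⁻¹ * ν (ball b (rad b)) := mul_le_mul_right hlt _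
      calc μ (closedBall b (4 * rad b)) ≤ Cl ^ 3 * lam b (rad b) := h1.trans h2
        _ ≤ Cl ^ 3 * (s⁻¹ * ν (ball b (rad b))) := mul_le_mul_right h3 _
    -- sum up
    have hsum : ν (⋃ b ∈ u, ball b (rad b)) = ∑' b : u, ν (ball (b : X) (rad b)) :=
      measure_biUnion hu_cnt
        (fun b hb c hc hbc => Disjoint.mono ball_subset_closedBall ball_subset_closedBall
          (hu_disj hb hc hbc))
        (fun b _ => measurableSet_ball)
    calc μ (E n) ≤ μ (⋃ b ∈ u, closedBall b (4 * rad b)) := measure_mono hEsub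
      _ ≤ ∑' b : u, μ (closedBall (b : X) (4 * rad b)) := measure_biUnion_le μ hu_cnt _
      _ ≤ ∑' b : u, Cl ^ 3 * (s⁻¹ * ν (ball (b : X) (rad b))) :=
          ENNReal.tsum_le_tsum (fun b => hper b b.2)
      _ = Cl ^ 3 * (s⁻¹ * ∑' b : u, ν (ball (b : X) (rad b))) := by
          rw [ENNReal.tsum_mul_left, ENNReal.tsum_mul_left]
      _ ≤ Cl ^ 3 * (s⁻¹ * ν Set.univ) := by
          refine mul_le_mul_right (mul_le_mul_right ?_ _) _
          rw [← hsum]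
          exact measure_mono (Set.subset_univ _)
  -- the full level set is contained in the union of truncated ones
  have hsub : {x | s < ⨆ (r : ℝ) (_ : 0 < r), (lam x r)⁻¹ * ∫⁻ y in ball x r, ‖f y‖₊ ∂μ}
      ⊆ ⋃ n : ℕ, E n := by
    intro x hx
    simp only [Set.mem_setOf_eq, lt_iSup_iff] at hx
    obtain ⟨r, hr, hlt⟩ := hx
    have hl0 : lam x r ≠ 0 := (hpos x r hr).1.ne'
    have hlt' : lam x r ≠ ⊤ := (hpos x r hr).2.ne
    have hball : s * lam x r < ν (ball x r) := by
      have h := hlt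
      rw [← hνball] at h
      have : lam x r * s < lam x r * ((lam x r)⁻¹ * ν (ball x r)) :=
        ENNReal.mul_lt_mul_right hl0 hlt' h
      rwa [← mul_assoc, ENNReal.mul_inv_cancel hl0 hlt', one_mul, mul_comm (lam x r) s] at this
    obtain ⟨n, hn⟩ := exists_nat_ge r
    exact Set.mem_iUnion.mpr ⟨n, r, hr, hn, hball⟩
  have hmonoE : Monotone E := by
    intro m n hmn x hx
    obtain ⟨r, hr0, hrm, hlt⟩ := hx
    exact ⟨r, hr0, hrm.trans (by exact_mod_cast hmn), hlt⟩
  calc μ _ ≤ μ (⋃ n : ℕ, E n) := measure_mono hsub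
    _ = ⨆ n : ℕ, μ (E n) := (hmonoE.directed_le).measure_iUnion
    _ ≤ Cl ^ 3 * (s⁻¹ * ν Set.univ) := iSup_le key
    _ = Cl ^ 3 * (s⁻¹ * ∫⁻ y, ‖f y‖₊ ∂μ) := by rw [hνuniv]

/-- On a geometrically doubling metric space with an upper doubling measure `μ` (dominating
function `lam`, halving/quasi-invariance constant `Cl`), the bilinear maximal operator
`𝓜_λ(f₁,f₂)(x) = sup_{r>0} λ(x,r)⁻² ∫_{B(x,r)}|f₁| ∫_{B(x,r)}|f₂|` is bounded from
`L¹(μ) × L¹(μ)` to `L^{1/2,∞}(μ)`: there is `C` with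
`μ{x : 𝓜_λ(f₁,f₂)(x) > t} ≤ C (t⁻¹ ‖f₁‖₁ ‖f₂‖₁)^{1/2}` for all `t > 0`. -/
theorem stmt1 {X : Type*} [MetricSpace X] [MeasurableSpace X] [BorelSpace X]
    (μ : Measure X) (n : ℕ) (Cgd : ℝ)
    -- geometric doubling: `r`-separated subsets of a ball of radius `R` have
    -- cardinality at most `Cgd * (R/r)^n`
    (hGD : ∀ (x : X) (R r : ℝ) (s : Finset X), 0 < r → r ≤ R →
      (∀ y ∈ s, y ∈ closedBall x R) → (∀ y ∈ s, ∀ z ∈ s, y ≠ z → r ≤ dist y z) →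
      (s.card : ℝ) ≤ Cgd * (R / r) ^ n)
    (lam : X → ℝ → ℝ≥0∞) (Cl : ℝ≥0∞) (hCl : 1 ≤ Cl) (hClfin : Cl < ⊤)
    (hpos : ∀ x r, 0 < r → 0 < lam x r ∧ lam x r < ⊤)
    (hmono : ∀ x r s, 0 < r → r ≤ s → lam x r ≤ lam x s)
    (hdom : ∀ x r, 0 < r → μ (ball x r) ≤ lam x r)
    (hhalf : ∀ x r, 0 < r → lam x r ≤ Cl * lam x (r / 2))
    (hquasi : ∀ x y r, 0 < r → dist x y ≤ r → lam x r ≤ Cl * lam y r) :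
    ∃ C : ℝ≥0∞, C < ⊤ ∧ ∀ (f₁ f₂ : X → ℝ), Integrable f₁ μ → Integrable f₂ μ →
      ∀ t : ℝ≥0∞, 0 < t →
        μ {x | t < ⨆ (r : ℝ) (_ : 0 < r),
            (lam x r)⁻¹ * (lam x r)⁻¹ * ((∫⁻ y in ball x r, ‖f₁ y‖₊ ∂μ) *
              ∫⁻ y in ball x r, ‖f₂ y‖₊ ∂μ)}
          ≤ C * (t⁻¹ * ((∫⁻ y, ‖f₁ y‖₊ ∂μ) * ∫⁻ y, ‖f₂ y‖₊ ∂μ)) ^ (1/2 : ℝ) := by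
  have sqrtsq : ∀ a : ℝ≥0∞, a ≠ 0 → a ≠ ⊤ → (a * a) ^ (1/2 : ℝ) = a := by
    intro a ha ha'
    rw [ENNReal.mul_rpow_of_nonneg _ _ (by norm_num : (0:ℝ) ≤ 1/2),
      ← ENNReal.rpow_add _ _ ha ha']
    norm_num
  refine ⟨2 * Cl ^ 3, ENNReal.mul_lt_top ofNat_lt_top (ENNReal.pow_lt_top (n := 3) hClfin), ?_⟩
  intro f₁ f₂ hf₁ hf₂ t ht
  set A := ∫⁻ y, ‖f₁ y‖₊ ∂μ with hA
  set B := ∫⁻ y, ‖f₂ y‖₊ ∂μ with hB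
  set S : Set X := {x | t < ⨆ (r : ℝ) (_ : 0 < r),
      (lam x r)⁻¹ * (lam x r)⁻¹ * ((∫⁻ y in ball x r, ‖f₁ y‖₊ ∂μ) *
        ∫⁻ y in ball x r, ‖f₂ y‖₊ ∂μ)} with hS
  by_cases htop : t = ⊤
  · have : S = ∅ := by
      ext x; simp [hS, htop, not_top_lt]
    rw [this]; simp
  by_cases hA0 : A = 0
  · have : S = ∅ := by
      ext x
      simp only [hS, Set.mem_setOf_eq, Set.mem_empty_iff_false, iff_false, not_lt]
      refine le_trans (iSup₂_le fun r hr => ?_) ht.le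
      have hI : ∫⁻ y in ball x r, ‖f₁ y‖₊ ∂μ = 0 :=
        le_antisymm (le_trans (setLIntegral_le_lintegral _ _) hA0.le) zero_le
      rw [hI, zero_mul, mul_zero]
    rw [this]; simp
  by_cases hB0 : B = 0
  · have : S = ∅ := by
      ext x
      simp only [hS, Set.mem_setOf_eq, Set.mem_empty_iff_false, iff_false, not_lt]
      refine le_trans (iSup₂_le fun r hr => ?_) ht.le
      have hI : ∫⁻ y in ball x r, ‖f₂ y‖₊ ∂μ = 0 :=
        le_antisymm (le_trans (setLIntegral_le_lintegral _ _) hB0.le) zero_le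
      rw [hI, mul_zero, mul_zero]
    rw [this]; simp
  -- main case
  have hAtop : A ≠ ⊤ := hf₁.2.ne
  have hBtop : B ≠ ⊤ := hf₂.2.ne
  set u := (t * A * B⁻¹) ^ (1/2 : ℝ) with hu
  set v := (t * B * A⁻¹) ^ (1/2 : ℝ) with hv
  have hubase0 : t * A * B⁻¹ ≠ 0 :=
    mul_ne_zero (mul_ne_zero ht.ne' hA0) (ENNReal.inv_ne_zero.mpr hBtop)
  have hubasetop : t * A * B⁻¹ ≠ ⊤ :=
    ENNReal.mul_ne_top (ENNReal.mul_ne_top htop hAtop) (ENNReal.inv_ne_top.mpr hB0)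
  have hvbase0 : t * B * A⁻¹ ≠ 0 :=
    mul_ne_zero (mul_ne_zero ht.ne' hB0) (ENNReal.inv_ne_zero.mpr hAtop)
  have hvbasetop : t * B * A⁻¹ ≠ ⊤ :=
    ENNReal.mul_ne_top (ENNReal.mul_ne_top htop hBtop) (ENNReal.inv_ne_top.mpr hA0)
  have hu0 : u ≠ 0 := by
    rw [hu]; exact (ENNReal.rpow_pos (pos_iff_ne_zero.mpr hubase0) hubasetop).ne'
  have hutop : u ≠ ⊤ := by
    rw [hu]; exact ENNReal.rpow_ne_top_of_nonneg (by norm_num) hubasetop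
  have hv0 : v ≠ 0 := by
    rw [hv]; exact (ENNReal.rpow_pos (pos_iff_ne_zero.mpr hvbase0) hvbasetop).ne'
  have hvtop : v ≠ ⊤ := by
    rw [hv]; exact ENNReal.rpow_ne_top_of_nonneg (by norm_num) hvbasetop
  have huv : u * v = t := by
    rw [hu, hv, ← ENNReal.mul_rpow_of_nonneg _ _ (by norm_num : (0:ℝ) ≤ 1/2)]
    have : t * A * B⁻¹ * (t * B * A⁻¹) = t * t * ((A * A⁻¹) * (B * B⁻¹)) := by ring
    rw [this, ENNReal.mul_inv_cancel hA0 hAtop, ENNReal.mul_inv_cancel hB0 hBtop,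
      mul_one, mul_one]
    exact sqrtsq t ht.ne' htop
  set S₁ : Set X := {x | u < ⨆ (r : ℝ) (_ : 0 < r),
      (lam x r)⁻¹ * ∫⁻ y in ball x r, ‖f₁ y‖₊ ∂μ} with hS₁
  set S₂ : Set X := {x | v < ⨆ (r : ℝ) (_ : 0 < r),
      (lam x r)⁻¹ * ∫⁻ y in ball x r, ‖f₂ y‖₊ ∂μ} with hS₂
  have hsub : S ⊆ S₁ ∪ S₂ := by
    intro x hx
    by_contra h
    rw [Set.mem_union, not_or] at h
    obtain ⟨h1, h2⟩ := h
    simp only [hS₁, Set.mem_setOf_eq, not_lt] at h1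
    simp only [hS₂, Set.mem_setOf_eq, not_lt] at h2
    have hprod : (⨆ (r : ℝ) (_ : 0 < r),
        (lam x r)⁻¹ * (lam x r)⁻¹ * ((∫⁻ y in ball x r, ‖f₁ y‖₊ ∂μ) *
          ∫⁻ y in ball x r, ‖f₂ y‖₊ ∂μ)) ≤
        (⨆ (r : ℝ) (_ : 0 < r), (lam x r)⁻¹ * ∫⁻ y in ball x r, ‖f₁ y‖₊ ∂μ) *
        ⨆ (r : ℝ) (_ : 0 < r), (lam x r)⁻¹ * ∫⁻ y in ball x r, ‖f₂ y‖₊ ∂μ := by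
      refine iSup₂_le fun r hr => ?_
      have heq : (lam x r)⁻¹ * (lam x r)⁻¹ * ((∫⁻ y in ball x r, ‖f₁ y‖₊ ∂μ) *
          ∫⁻ y in ball x r, ‖f₂ y‖₊ ∂μ) =
          ((lam x r)⁻¹ * ∫⁻ y in ball x r, ‖f₁ y‖₊ ∂μ) *
          ((lam x r)⁻¹ * ∫⁻ y in ball x r, ‖f₂ y‖₊ ∂μ) := by ring
      rw [heq]
      exact mul_le_mul'
        (le_iSup₂ (f := fun (r : ℝ) (_ : 0 < r) =>
          (lam x r)⁻¹ * ∫⁻ y in ball x r, ‖f₁ y‖₊ ∂μ) r hr)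
        (le_iSup₂ (f := fun (r : ℝ) (_ : 0 < r) =>
          (lam x r)⁻¹ * ∫⁻ y in ball x r, ‖f₂ y‖₊ ∂μ) r hr)
    have : t < t := lt_of_lt_of_le hx (hprod.trans (by
      rw [← huv]; exact mul_le_mul' h1 h2))
    exact lt_irrefl t this
  have hw1 := weak11 μ lam Cl hpos hmono hdom hhalf f₁ hf₁ u (pos_iff_ne_zero.mpr hu0) hutop
  have hw2 := weak11 μ lam Cl hpos hmono hdom hhalf f₂ hf₂ v (pos_iff_ne_zero.mpr hv0) hvtop
  have hu_inv : u⁻¹ * A = (t⁻¹ * (A * B)) ^ (1/2 : ℝ) := by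
    have hbase_inv : (t * A * B⁻¹)⁻¹ = t⁻¹ * A⁻¹ * B := by
      rw [ENNReal.mul_inv (Or.inr (ENNReal.inv_ne_top.mpr hB0))
          (Or.inr (ENNReal.inv_ne_zero.mpr hBtop)), inv_inv,
        ENNReal.mul_inv (Or.inl ht.ne') (Or.inl htop)]
    calc u⁻¹ * A = ((t * A * B⁻¹)⁻¹) ^ (1/2 : ℝ) * ((A * A) ^ (1/2 : ℝ)) := by
          rw [hu, ← ENNReal.inv_rpow, sqrtsq A hA0 hAtop]
      _ = ((t * A * B⁻¹)⁻¹ * (A * A)) ^ (1/2 : ℝ) := by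
          rw [← ENNReal.mul_rpow_of_nonneg _ _ (by norm_num : (0:ℝ) ≤ 1/2)]
      _ = (t⁻¹ * (A * B)) ^ (1/2 : ℝ) := by
          rw [hbase_inv]
          congr 1
          have h : t⁻¹ * A⁻¹ * B * (A * A) = (t⁻¹ * (A * B)) * (A⁻¹ * A) := by ring
          rw [h, ENNReal.inv_mul_cancel hA0 hAtop, mul_one]
  have hv_inv : v⁻¹ * B = (t⁻¹ * (A * B)) ^ (1/2 : ℝ) := by
    have hbase_inv : (t * B * A⁻¹)⁻¹ = t⁻¹ * B⁻¹ * A := by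
      rw [ENNReal.mul_inv (Or.inr (ENNReal.inv_ne_top.mpr hA0))
          (Or.inr (ENNReal.inv_ne_zero.mpr hAtop)), inv_inv,
        ENNReal.mul_inv (Or.inl ht.ne') (Or.inl htop)]
    calc v⁻¹ * B = ((t * B * A⁻¹)⁻¹) ^ (1/2 : ℝ) * ((B * B) ^ (1/2 : ℝ)) := by
          rw [hv, ← ENNReal.inv_rpow, sqrtsq B hB0 hBtop]
      _ = ((t * B * A⁻¹)⁻¹ * (B * B)) ^ (1/2 : ℝ) := by
          rw [← ENNReal.mul_rpow_of_nonneg _ _ (by norm_num : (0:ℝ) ≤ 1/2)]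
      _ = (t⁻¹ * (A * B)) ^ (1/2 : ℝ) := by
          rw [hbase_inv]
          congr 1
          have h : t⁻¹ * B⁻¹ * A * (B * B) = (t⁻¹ * (A * B)) * (B⁻¹ * B) := by ring
          rw [h, ENNReal.inv_mul_cancel hB0 hBtop, mul_one]
  calc μ S ≤ μ (S₁ ∪ S₂) := measure_mono hsub
    _ ≤ μ S₁ + μ S₂ := measure_union_le _ _
    _ ≤ Cl ^ 3 * (u⁻¹ * A) + Cl ^ 3 * (v⁻¹ * B) := add_le_add hw1 hw2
    _ = 2 * Cl ^ 3 * (t⁻¹ * (A * B)) ^ (1/2 : ℝ) := by rw [hu_inv, hv_inv]; ring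
end
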